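/- If 0 < t, s < ∞ with c⁻¹ s ≤ t ≤ c s for some c ≥ 1, 1 ≤ r < ∞, and 0 < p < ∞, then the slice-spaces coincide: (E^p_r)_t = (E^p_r)_s with equivalent norms ‖f‖_{(E^p_r)_t} ≍ ‖f‖_{(E^p_r)_s}, the implied constants depending only on n, p, r, c. -/

import Mathlib

open MeasureTheory Metric Set ENNReal
open scoped NNReal

noncomputable section

abbrev Rn (n : ℕ) := EuclideanSpace ℝ (Fin n)

variable {n : ℕ}

/-- `L^r` average of an `ℝ≥0∞`-valued function over a ball. -/
def ballAvg (r : ℝ) (g : Rn n → ℝ≥0∞) (x : Rn n) (t : ℝ) : ℝ≥0∞ :=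
  ((volume (ball x t))⁻¹ * ∫⁻ y in ball x t, (g y) ^ r) ^ (1 / r)

/-- Centered Hardy–Littlewood maximal operator. -/
def maximal (f : Rn n → ℝ) (x : Rn n) : ℝ≥0∞ :=
  ⨆ (τ : ℝ) (_ : 0 < τ), (volume (ball x τ))⁻¹ * ∫⁻ y in ball x τ, (‖f y‖₊ : ℝ≥0∞)

/-- Uncentered Hardy–Littlewood maximal operator of an `ℝ≥0∞`-valued function. -/
def umaximal (g : Rn n → ℝ≥0∞) (x : Rn n) : ℝ≥0∞ :=
  ⨆ (z : Rn n) (τ : ℝ) (_ : 0 < τ) (_ : x ∈ ball z τ),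
    (volume (ball z τ))⁻¹ * ∫⁻ y in ball z τ, g y

/-- Conical square functional `A_r` (with the `dy dt / t^{n+1}` measure). -/
def conical (r : ℝ) (G : Rn n → ℝ → ℝ≥0∞) (x : Rn n) : ℝ≥0∞ :=
  (∫⁻ t in Ioi (0 : ℝ),
      (∫⁻ y in ball x t, (G y t) ^ r) * ENNReal.ofReal (t ^ (-(n : ℝ) - 1))) ^ (1 / r)

/-- Tent space quasinorm `‖G‖_{T^q_r} = ‖A_r G‖_{L^q}`. -/
def tentNorm (q r : ℝ) (G : Rn n → ℝ → ℝ≥0∞) : ℝ≥0∞ :=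
  (∫⁻ x, (conical r G x) ^ q) ^ (1 / q)

def enn (F : Rn n → ℝ → ℝ) : Rn n → ℝ → ℝ≥0∞ := fun y t => (‖F y t‖₊ : ℝ≥0∞)

/-- Vertical square functional `V_r`. -/
def vertical (r : ℝ) (G : Rn n → ℝ → ℝ≥0∞) (x : Rn n) : ℝ≥0∞ :=
  (∫⁻ t in Ioi (0 : ℝ), (G x t) ^ r * ENNReal.ofReal t⁻¹) ^ (1 / r)

/-- Tent over the ball `B(x₀,ρ)`: points `(x,t)` with `t ≤ dist(x, ℝⁿ ∖ B)`. -/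
def tent (x₀ : Rn n) (ρ : ℝ) : Set (Rn n × ℝ) :=
  {p | 0 < p.2 ∧ p.2 ≤ infDist p.1 (ball x₀ ρ)ᶜ}

/-- `∬_S |M(x,t)|^r dx dt/t`. -/
def tentInt (r : ℝ) (M : Rn n → ℝ → ℝ) (S : Set (Rn n × ℝ)) : ℝ≥0∞ :=
  ∫⁻ t in Ioi (0 : ℝ),
    (∫⁻ y, S.indicator (fun p => (‖M p.1 p.2‖₊ : ℝ≥0∞) ^ r) (y, t)) * ENNReal.ofReal t⁻¹

/-- Maximal truncated singular integral `T_*`. -/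
def tstar (K : Rn n → Rn n → ℝ) (f : Rn n → ℝ) (x : Rn n) : ℝ≥0∞ :=
  ⨆ (ε : ℝ) (_ : 0 < ε), (‖∫ y in {y | ε < dist x y}, K x y * f y‖₊ : ℝ≥0∞)

def rieszGamma (n : ℕ) (α : ℝ) : ℝ :=
  Real.pi ^ ((n : ℝ) / 2) * 2 ^ α * Real.Gamma (α / 2) / Real.Gamma (((n : ℝ) - α) / 2)

/-- Riesz potential of an `ℝ≥0∞`-valued function. -/
def rieszPot (α : ℝ) (g : Rn n → ℝ≥0∞) (x : Rn n) : ℝ≥0∞ :=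
  (ENNReal.ofReal (rieszGamma n α))⁻¹ * ∫⁻ z, g z * ENNReal.ofReal (dist x z ^ (α - n))

/-- Fractional maximal function `M_α f(x) = sup_τ |B(x,τ)|^{α/n} ⨍_{B(x,τ)} |f|`. -/
def fracMax (α : ℝ) (f : Rn n → ℝ) (x : Rn n) : ℝ≥0∞ :=
  ⨆ (τ : ℝ) (_ : 0 < τ),
    (volume (ball x τ)) ^ (α / n) *
      ((volume (ball x τ))⁻¹ * ∫⁻ y in ball x τ, (‖f y‖₊ : ℝ≥0∞))

/-- `T^q_r` atom. -/
def IsTentAtom (q r : ℝ) (A : Rn n → ℝ → ℝ) : Prop :=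
  ∃ (x₀ : Rn n) (ρ : ℝ), 0 < ρ ∧ (∀ y t, A y t ≠ 0 → (y, t) ∈ tent x₀ ρ) ∧
    (tentInt r A Set.univ) ^ (1 / r) ≤ (volume (ball x₀ ρ)) ^ (1 / r - 1 / q)

/-- `𝔗^q_r` atom: a `T^q_r` atom with vanishing mean in `x` for a.e. `t > 0`. -/
def IsFrakAtom (q r : ℝ) (A : Rn n → ℝ → ℝ) : Prop :=
  IsTentAtom q r A ∧ ∀ᵐ t ∂(volume.restrict (Ioi (0 : ℝ))), (∫ x, A x t) = 0

/-- `𝔗^q_r` quasinorm via atomic decompositions into `𝔗^q_r` atoms. -/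
def frakNorm (q r : ℝ) (F : Rn n → ℝ → ℝ) : ℝ≥0∞ :=
  ⨅ (d : {p : (ℕ → ℝ) × (ℕ → Rn n → ℝ → ℝ) //
      (∀ i, IsFrakAtom q r (p.2 i)) ∧ ∀ y t, F y t = ∑' i, p.1 i * p.2 i y t}),
    ENNReal.ofReal ((∑' i, |d.1.1 i| ^ q) ^ (1 / q))

/-- Slice-space quasinorm `‖f‖_{(E^p_r)_t}`. -/
def sliceNorm (p r t : ℝ) (f : Rn n → ℝ) : ℝ≥0∞ :=
  (∫⁻ x, ((volume (ball x t))⁻¹ * ∫⁻ y in ball x t, (‖f y‖₊ : ℝ≥0∞) ^ r) ^ (p / r)) ^ (1 / p)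

def iMap (t : ℝ) (f : Rn n → ℝ) : Rn n → ℝ → ℝ :=
  fun x s => if s ∈ Icc t (Real.exp 1 * t) then f x else 0

def piMap (t : ℝ) (G : Rn n → ℝ → ℝ) : Rn n → ℝ :=
  fun x => ∫ s in Ioc t (Real.exp 1 * t), G x s / s

lemma lsc_const_mul {α : Type*} [TopologicalSpace α] (a : ℝ≥0∞) {m : α → ℝ≥0∞}
    (hm : LowerSemicontinuous m) : LowerSemicontinuous fun x => a * m x := by
  intro x c hc
  replace hc : c < a * m x := hc
  rcases eq_or_ne (m x) 0 with h0 | h0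
  · simp [h0] at hc
  · have hsup : a * m x = ⨆ b : Iio (m x), a * (b : ℝ≥0∞) := by
      rw [← ENNReal.mul_iSup]
      congr 1
      rw [← sSup_eq_iSup']
      refine le_antisymm ?_ (sSup_le fun b hb => hb.le)
      by_contra h
      push_neg at h
      obtain ⟨b, hb1, hb2⟩ := exists_between h
      exact absurd (le_sSup (show b ∈ Iio (m x) from hb2)) (not_le.mpr hb1)
    rw [hsup] at hc
    obtain ⟨⟨b, hb⟩, hcb⟩ := lt_iSup_iff.mp hc
    filter_upwards [hm x b hb] with y hy
    exact hcb.trans_le (mul_le_mul_right hy.le a)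

lemma lsc_ball_measure (A : Set (Rn n)) (s : ℝ) :
    LowerSemicontinuous fun x : Rn n => volume (A ∩ ball x s) := by
  intro x c hc
  replace hc : c < volume (A ∩ ball x s) := hc
  have hU : A ∩ ball x s = ⋃ k : ℕ, A ∩ ball x (s - 1 / (k + 1)) := by
    ext y
    simp only [mem_iUnion, mem_inter_iff, mem_ball]
    constructor
    · rintro ⟨hA, hy⟩
      obtain ⟨k, hk⟩ := exists_nat_one_div_lt (sub_pos.mpr hy)
      exact ⟨k, hA, by linarith⟩
    · rintro ⟨k, hA, hy⟩
      refine ⟨hA, hy.trans_le ?_⟩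
      have : 0 < 1 / ((k:ℝ) + 1) := by positivity
      linarith
  have hmono : Monotone fun k : ℕ => A ∩ ball x (s - 1 / (k + 1)) := by
    intro i j hij
    refine inter_subset_inter_right _ (ball_subset_ball ?_)
    have : 1 / ((j:ℝ) + 1) ≤ 1 / ((i:ℝ) + 1) := by
      apply one_div_le_one_div_of_le (by positivity)
      exact_mod_cast by omega
    linarith
  rw [hU, hmono.directed_le.measure_iUnion] at hc
  obtain ⟨k, hk⟩ := lt_iSup_iff.mp hc
  have hδ : 0 < 1 / ((k:ℝ) + 1) := by positivity
  filter_upwards [ball_mem_nhds x hδ] with y hy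
  refine hk.trans_le (measure_mono (inter_subset_inter_right _ fun z hz => ?_))
  calc dist z y ≤ dist z x + dist x y := dist_triangle _ _ _
    _ < (s - 1/((k:ℝ)+1)) + 1/((k:ℝ)+1) := by
        rw [mem_ball] at hz hy
        rw [dist_comm] at hy
        linarith
    _ = s := by ring

lemma meas_ball_lintegral (g : Rn n → ℝ≥0∞) (s : ℝ) :
    Measurable fun x : Rn n => ∫⁻ y in ball x s, g y := by
  have : LowerSemicontinuous fun x : Rn n => ∫⁻ y in ball x s, g y := by
    have heq : (fun x : Rn n => ∫⁻ y in ball x s, g y)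
        = fun x => ⨆ (φ : SimpleFunc (Rn n) ℝ≥0∞) (_ : ⇑φ ≤ g),
            ∑ v ∈ φ.range, v * volume (φ ⁻¹' {v} ∩ ball x s) := by
      funext x
      rw [MeasureTheory.lintegral]
      congr 1; funext φ; congr 1; funext hφ
      rw [SimpleFunc.lintegral]
      congr 1; funext v
      rw [Measure.restrict_apply (φ.measurableSet_fiber v)]
    rw [heq]
    refine lowerSemicontinuous_iSup fun φ => lowerSemicontinuous_iSup fun _ => ?_
    exact lowerSemicontinuous_sum fun v _ => lsc_const_mul v (lsc_ball_measure _ s)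
  exact this.measurable

lemma cover_ball (c : ℝ) :
    ∃ Z : Finset (Rn n), ball (0 : Rn n) c ⊆ ⋃ z ∈ Z, ball (z : Rn n) 1 := by
  have hK : IsCompact (closedBall (0 : Rn n) c) := isCompact_closedBall _ _
  have hsub : closedBall (0 : Rn n) c ⊆ ⋃ z ∈ closedBall (0 : Rn n) c, ball z 1 :=
    fun y hy => mem_biUnion hy (mem_ball_self one_pos)
  obtain ⟨b, hbsub, hbfin, hcov⟩ :=
    hK.elim_finite_subcover_image (fun z _ => isOpen_ball) hsub
  exact ⟨hbfin.toFinset, le_trans ball_subset_closedBall (hcov.trans (by simp))⟩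

lemma rpow_sum_le {ι : Type*} (Z : Finset ι) (a : ι → ℝ≥0∞) {q : ℝ} (hq : 0 < q) :
    (∑ i ∈ Z, a i) ^ q ≤ (Z.card : ℝ≥0∞) ^ q * ∑ i ∈ Z, (a i) ^ q := by
  rcases Z.eq_empty_or_nonempty with hZ | hZ
  · simp [hZ, ENNReal.zero_rpow_of_pos hq]
  · obtain ⟨i₀, hi₀, hm⟩ := Finset.exists_mem_eq_sup Z hZ a
    have h1 : ∑ i ∈ Z, a i ≤ (Z.card : ℝ≥0∞) * Z.sup a := by
      calc ∑ i ∈ Z, a i ≤ ∑ _i ∈ Z, Z.sup a :=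
            Finset.sum_le_sum fun i hi => Finset.le_sup hi
        _ = (Z.card : ℝ≥0∞) * Z.sup a := by rw [Finset.sum_const, nsmul_eq_mul]
    calc (∑ i ∈ Z, a i) ^ q ≤ ((Z.card : ℝ≥0∞) * Z.sup a) ^ q :=
          ENNReal.rpow_le_rpow h1 hq.le
      _ = (Z.card : ℝ≥0∞) ^ q * (Z.sup a) ^ q := ENNReal.mul_rpow_of_nonneg _ _ hq.le
      _ ≤ (Z.card : ℝ≥0∞) ^ q * ∑ i ∈ Z, (a i) ^ q := by
          refine mul_le_mul_right ?_ _
          rw [hm]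
          exact Finset.single_le_sum (f := fun i => a i ^ q) (fun i _ => zero_le) hi₀

lemma vol_ball (x : Rn n) (t : ℝ) (ht : 0 < t) :
    volume (ball x t) = ENNReal.ofReal (t ^ n) * volume (ball (0 : Rn n) 1) := by
  rcases Nat.eq_zero_or_pos n with hn | hn
  · subst hn
    haveI : Subsingleton (Rn 0) := ⟨fun a b => (WithLp.equiv 2 _).injective (Subsingleton.elim _ _)⟩
    have hb : ∀ (y : Rn 0) (τ : ℝ), 0 < τ → ball y τ = univ := fun y τ hτ =>
      eq_univ_of_forall fun z => by simp [mem_ball, Subsingleton.elim z y, hτ]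
    rw [hb x t ht, hb 0 1 one_pos]; simp
  · haveI : Nontrivial (Rn n) := by
      have : Module.finrank ℝ (Rn n) = n := finrank_euclideanSpace_fin
      exact Module.nontrivial_of_finrank_pos (R := ℝ) (by omega)
    rw [Measure.addHaar_ball volume x ht.le]
    simp [finrank_euclideanSpace_fin]


lemma key (p r c : ℝ) (hr : 1 ≤ r) (hp : 0 < p) (hc : 1 ≤ c) :
    ∃ C : ℝ≥0∞, 0 < C ∧ C ≠ ∞ ∧ ∀ t s : ℝ, 0 < t → 0 < s → s ≤ c * t → t ≤ c * s →
      ∀ f : Rn n → ℝ, sliceNorm p r t f ≤ C * sliceNorm p r s f := by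
  have hr0 : (0:ℝ) < r := lt_of_lt_of_le one_pos hr
  have hq : 0 < p / r := div_pos hp hr0
  set q := p / r with hqdef
  obtain ⟨Z, hZ⟩ := cover_ball (n := n) c
  set N : ℝ≥0∞ := (Z.card : ℝ≥0∞) with hN
  set C₀ : ℝ≥0∞ := (ENNReal.ofReal (c ^ n)) ^ q * N ^ q * N + 1 with hC₀
  have hC₀top : C₀ ≠ ∞ := by
    refine ENNReal.add_ne_top.mpr ⟨?_, one_ne_top⟩
    exact ENNReal.mul_ne_top
      (ENNReal.mul_ne_top (ENNReal.rpow_ne_top_of_nonneg hq.le ofReal_ne_top)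
        (ENNReal.rpow_ne_top_of_nonneg hq.le (natCast_ne_top _))) (natCast_ne_top _)
  refine ⟨C₀ ^ (1/p), ?_, ?_, ?_⟩
  · exact ENNReal.rpow_pos (lt_of_lt_of_le one_pos le_add_self) hC₀top
  · exact ENNReal.rpow_ne_top_of_nonneg (by positivity) hC₀top
  intro t s ht hs hst hts f
  set V : ℝ≥0∞ := volume (ball (0 : Rn n) 1) with hV
  have hV0 : V ≠ 0 := (measure_ball_pos _ _ one_pos).ne'
  have hVtop : V ≠ ∞ := measure_ball_lt_top.ne
  set g : Rn n → ℝ≥0∞ := fun y => (‖f y‖₊ : ℝ≥0∞) ^ r with hg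
  set u : Rn n → ℝ≥0∞ := fun x => ∫⁻ y in ball x s, g y with hu
  have humeas : Measurable u := meas_ball_lintegral g s
  set F : Rn n → ℝ≥0∞ := fun w => (ENNReal.ofReal (s ^ n) * V)⁻¹ * u w with hF
  have hFmeas : Measurable F := humeas.const_mul _
  -- the inverse-volume comparison
  have hinv : (ENNReal.ofReal (t ^ n) * V)⁻¹
      ≤ ENNReal.ofReal (c ^ n) * (ENNReal.ofReal (s ^ n) * V)⁻¹ := by
    have htn0 : ENNReal.ofReal (t ^ n) ≠ 0 := by
      simp [ENNReal.ofReal_eq_zero, not_le, pow_pos ht n]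
    have hsn0 : ENNReal.ofReal (s ^ n) ≠ 0 := by
      simp [ENNReal.ofReal_eq_zero, not_le, pow_pos hs n]
    rw [ENNReal.mul_inv (Or.inl htn0) (Or.inl ofReal_ne_top),
      ENNReal.mul_inv (Or.inl hsn0) (Or.inl ofReal_ne_top), ← mul_assoc]
    refine mul_le_mul_left ?_ V⁻¹
    rw [← ENNReal.ofReal_inv_of_pos (pow_pos ht n),
      ← ENNReal.ofReal_inv_of_pos (pow_pos hs n), ← ENNReal.ofReal_mul (by positivity)]
    refine ENNReal.ofReal_le_ofReal ?_
    rw [← one_div, ← div_eq_mul_inv (c^n),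
      div_le_div_iff₀ (pow_pos ht n) (pow_pos hs n), one_mul]
    calc s ^ n ≤ (c * t) ^ n := pow_le_pow_left₀ hs.le hst n
      _ = c ^ n * t ^ n := mul_pow c t n
  -- pointwise bound
  have hpt : ∀ x : Rn n, (volume (ball x t))⁻¹ * ∫⁻ y in ball x t, g y
      ≤ ENNReal.ofReal (c ^ n) * ∑ z ∈ Z, F (x + s • (z : Rn n)) := by
    intro x
    have hcov : ball x t ⊆ ⋃ z ∈ Z, ball (x + s • (z : Rn n)) s := by
      intro y hy
      have hyx : dist y x < c * s := lt_of_lt_of_le (mem_ball.mp hy) hts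
      have hw : s⁻¹ • (y - x) ∈ ball (0 : Rn n) c := by
        rw [mem_ball, dist_zero_right, norm_smul, norm_inv, Real.norm_eq_abs,
          abs_of_pos hs]
        rw [dist_eq_norm] at hyx
        rw [inv_mul_lt_iff₀ hs, mul_comm]
        exact hyx
      obtain ⟨z, hzZ, hz1⟩ := Set.mem_iUnion₂.mp (hZ hw)
      refine Set.mem_iUnion₂.mpr ⟨z, hzZ, ?_⟩
      rw [mem_ball, dist_eq_norm] at hz1 ⊢
      have hrec : y - (x + s • (z : Rn n)) = s • (s⁻¹ • (y - x) - z) := by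
        rw [smul_sub, smul_inv_smul₀ hs.ne']
        abel
      calc ‖y - (x + s • (z : Rn n))‖ = |s| * ‖s⁻¹ • (y - x) - (z : Rn n)‖ := by
            rw [hrec, norm_smul, Real.norm_eq_abs]
        _ < s := by
            rw [abs_of_pos hs]
            calc s * ‖s⁻¹ • (y - x) - (z : Rn n)‖ < s * 1 := by
                  exact (mul_lt_mul_iff_right₀ hs).mpr hz1
              _ = s := mul_one s
    have h2 : (∫⁻ y in ball x t, g y) ≤ ∑ z ∈ Z, u (x + s • (z : Rn n)) := by
      calc (∫⁻ y in ball x t, g y)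
          ≤ ∫⁻ y in ⋃ z ∈ Z, ball (x + s • (z : Rn n)) s, g y :=
            lintegral_mono' (Measure.restrict_mono hcov le_rfl) le_rfl
        _ = ∫⁻ y in ⋃ z : {z // z ∈ Z}, ball (x + s • (z : Rn n)) s, g y := by
            rw [Set.iUnion_subtype]
        _ ≤ ∑' z : {z // z ∈ Z}, ∫⁻ y in ball (x + s • ((z : Rn n))) s, g y :=
            lintegral_iUnion_le _ _
        _ = ∑ z ∈ Z, u (x + s • (z : Rn n)) := by
            rw [tsum_fintype]
            exact Finset.sum_coe_sort Z (fun z => u (x + s • (z : Rn n)))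
    calc (volume (ball x t))⁻¹ * ∫⁻ y in ball x t, g y
        ≤ (ENNReal.ofReal (t ^ n) * V)⁻¹ * ∑ z ∈ Z, u (x + s • (z : Rn n)) := by
          rw [vol_ball x t ht]
          exact mul_le_mul_right h2 _
      _ ≤ (ENNReal.ofReal (c ^ n) * (ENNReal.ofReal (s ^ n) * V)⁻¹)
            * ∑ z ∈ Z, u (x + s • (z : Rn n)) := mul_le_mul_left hinv _
      _ = ENNReal.ofReal (c ^ n) * ∑ z ∈ Z, F (x + s • (z : Rn n)) := by
          rw [mul_assoc, Finset.mul_sum]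
  -- integrate
  have hmeasz : ∀ z ∈ Z, AEMeasurable (fun x : Rn n => F (x + s • (z : Rn n)) ^ q) volume :=
    fun z _ => ((ENNReal.continuous_rpow_const.measurable).comp
      (hFmeas.comp (measurable_add_const _))).aemeasurable
  have hconst_ne : (ENNReal.ofReal (c ^ n)) ^ q * N ^ q ≠ ∞ :=
    ENNReal.mul_ne_top (ENNReal.rpow_ne_top_of_nonneg hq.le ofReal_ne_top)
      (ENNReal.rpow_ne_top_of_nonneg hq.le (natCast_ne_top _))
  have hmain : (∫⁻ x, ((volume (ball x t))⁻¹ * ∫⁻ y in ball x t, g y) ^ q)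
      ≤ C₀ * ∫⁻ x, ((volume (ball x s))⁻¹ * ∫⁻ y in ball x s, g y) ^ q := by
    have hFs : (fun x : Rn n => ((volume (ball x s))⁻¹ * ∫⁻ y in ball x s, g y) ^ q)
        = fun x => F x ^ q := by
      funext x
      rw [vol_ball x s hs]
    rw [hFs]
    calc (∫⁻ x, ((volume (ball x t))⁻¹ * ∫⁻ y in ball x t, g y) ^ q)
        ≤ ∫⁻ x, ((ENNReal.ofReal (c ^ n)) ^ q * N ^ q)
            * ∑ z ∈ Z, F (x + s • (z : Rn n)) ^ q := by
          refine lintegral_mono fun x => ?_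
          calc ((volume (ball x t))⁻¹ * ∫⁻ y in ball x t, g y) ^ q
              ≤ (ENNReal.ofReal (c ^ n) * ∑ z ∈ Z, F (x + s • (z : Rn n))) ^ q :=
                ENNReal.rpow_le_rpow (hpt x) hq.le
            _ = (ENNReal.ofReal (c ^ n)) ^ q * (∑ z ∈ Z, F (x + s • (z : Rn n))) ^ q :=
                ENNReal.mul_rpow_of_nonneg _ _ hq.le
            _ ≤ (ENNReal.ofReal (c ^ n)) ^ q
                * (N ^ q * ∑ z ∈ Z, F (x + s • (z : Rn n)) ^ q) :=
                mul_le_mul_right (rpow_sum_le Z _ hq) _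
            _ = ((ENNReal.ofReal (c ^ n)) ^ q * N ^ q)
                * ∑ z ∈ Z, F (x + s • (z : Rn n)) ^ q := by rw [mul_assoc]
      _ = ((ENNReal.ofReal (c ^ n)) ^ q * N ^ q)
            * ∑ z ∈ Z, ∫⁻ x, F (x + s • (z : Rn n)) ^ q := by
          rw [lintegral_const_mul' _ _ hconst_ne, lintegral_finset_sum' Z hmeasz]
      _ = ((ENNReal.ofReal (c ^ n)) ^ q * N ^ q) * ∑ _z ∈ Z, ∫⁻ x, F x ^ q := by
          congr 1
          refine Finset.sum_congr rfl fun z _ => ?_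
          exact lintegral_add_right_eq_self (fun w => F w ^ q) (s • (z : Rn n))
      _ = ((ENNReal.ofReal (c ^ n)) ^ q * N ^ q * N) * ∫⁻ x, F x ^ q := by
          rw [Finset.sum_const, nsmul_eq_mul, ← mul_assoc, hN]
      _ ≤ C₀ * ∫⁻ x, F x ^ q := by
          refine mul_le_mul_left ?_ _
          rw [hC₀]
          exact le_self_add
  show (∫⁻ x, ((volume (ball x t))⁻¹ * ∫⁻ y in ball x t, g y) ^ q) ^ (1/p)
      ≤ C₀ ^ (1/p) * (∫⁻ x, ((volume (ball x s))⁻¹ * ∫⁻ y in ball x s, g y) ^ q) ^ (1/p)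
  calc (∫⁻ x, ((volume (ball x t))⁻¹ * ∫⁻ y in ball x t, g y) ^ q) ^ (1/p)
      ≤ (C₀ * ∫⁻ x, ((volume (ball x s))⁻¹ * ∫⁻ y in ball x s, g y) ^ q) ^ (1/p) :=
        ENNReal.rpow_le_rpow hmain (by positivity)
    _ = C₀ ^ (1/p) * (∫⁻ x, ((volume (ball x s))⁻¹ * ∫⁻ y in ball x s, g y) ^ q) ^ (1/p) :=
        ENNReal.mul_rpow_of_nonneg _ _ (by positivity)

/-- slice-space norms at comparable scales are equivalent. -/
theorem stmt14 (n : ℕ) (p r c : ℝ) (hr : 1 ≤ r) (hp : 0 < p) (hc : 1 ≤ c) :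
    ∃ C : ℝ≥0∞, 0 < C ∧ C ≠ ∞ ∧ ∀ t s : ℝ, 0 < t → 0 < s →
      c⁻¹ * s ≤ t → t ≤ c * s → ∀ f : Rn n → ℝ,
        sliceNorm p r t f ≤ C * sliceNorm p r s f ∧
        sliceNorm p r s f ≤ C * sliceNorm p r t f := by
  obtain ⟨C, hC0, hCtop, hC⟩ := key (n := n) p r c hr hp hc
  refine ⟨C, hC0, hCtop, fun t s ht hs h1 h2 f => ?_⟩
  have hc0 : (0:ℝ) < c := lt_of_lt_of_le one_pos hc
  have hst : s ≤ c * t := by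
    have := mul_le_mul_of_nonneg_left h1 hc0.le
    rw [← mul_assoc, mul_inv_cancel₀ hc0.ne', one_mul] at this
    exact this
  exact ⟨hC t s ht hs hst h2 f, hC s t hs ht h2 hst f⟩
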